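/- For every integer t ≥ 1, the graph G_t = K_t * C_5 (the join of a complete graph on t vertices with a 5-cycle) satisfies χ(G_t) = t + 3, ω(G_t) = t + 2, Δ(G_t) = t + 4, and G_t is claw-free. -/

import Mathlib

/-- The join of two graphs: disjoint union plus all edges in between. -/
def join {α β : Type*} (A : SimpleGraph α) (B : SimpleGraph β) :
    SimpleGraph (α ⊕ β) where
  Adj u v :=
    match u, v with
    | Sum.inl a, Sum.inl a' => A.Adj a a'
    | Sum.inr b, Sum.inr b' => B.Adj b b'
    | _, _ => True
  symm := by
    constructor
    rintro (a | a) (b | b) h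
    · exact A.adj_symm h
    · trivial
    · trivial
    · exact B.adj_symm h
  loopless := by
    constructor
    rintro (a | a) h
    · exact A.irrefl h
    · exact B.irrefl h

/-- Degree via the cardinality of the neighbor set. -/
noncomputable def deg {α : Type*} (G : SimpleGraph α) (v : α) : ℕ :=
  (G.neighborSet v).ncard

/-- Maximum degree. -/
noncomputable def maxDeg {α : Type*} (G : SimpleGraph α) : ℕ :=
  sSup (Set.range (deg G))

/-- Clique number. -/
noncomputable def cliqueNum {α : Type*} (G : SimpleGraph α) : ℕ :=
  sSup {n | ∃ S : Finset α, G.IsNClique n S}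

/-- Claw-free: no induced `K_{1,3}`. -/
def ClawFree {V : Type*} (G : SimpleGraph V) : Prop :=
  ∀ v a b c : V, G.Adj v a → G.Adj v b → G.Adj v c →
    ¬G.Adj a b → ¬G.Adj a c → ¬G.Adj b c → a = b ∨ a = c ∨ b = c

/-- The 5-cycle. -/
def C5 : SimpleGraph (Fin 5) := SimpleGraph.fromRel (fun i j => j = i + 1)

instance : DecidableRel C5.Adj := fun a b =>
  decidable_of_iff _ (SimpleGraph.fromRel_adj (fun i j => j = i + 1) a b).symm

section lemmas

variable {t : ℕ}

local notation "G" => join (⊤ : SimpleGraph (Fin t)) C5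

@[simp] lemma join_adj_ll {a a' : Fin t} :
    (G).Adj (Sum.inl a) (Sum.inl a') ↔ a ≠ a' := by
  constructor
  · exact fun h => (SimpleGraph.top_adj _ _).mp h
  · exact fun h => (SimpleGraph.top_adj _ _).mpr h

@[simp] lemma join_adj_lr {a : Fin t} {b : Fin 5} :
    (G).Adj (Sum.inl a) (Sum.inr b) := trivial

@[simp] lemma join_adj_rl {a : Fin t} {b : Fin 5} :
    (G).Adj (Sum.inr b) (Sum.inl a) := trivial

@[simp] lemma join_adj_rr {b b' : Fin 5} :
    (G).Adj (Sum.inr b) (Sum.inr b') ↔ C5.Adj b b' := Iff.rfl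

instance : DecidableRel (G).Adj := fun u v =>
  match u, v with
  | Sum.inl a, Sum.inl a' => inferInstanceAs (Decidable ((⊤ : SimpleGraph (Fin t)).Adj a a'))
  | Sum.inl _, Sum.inr _ => inferInstanceAs (Decidable True)
  | Sum.inr _, Sum.inl _ => inferInstanceAs (Decidable True)
  | Sum.inr b, Sum.inr b' => inferInstanceAs (Decidable (C5.Adj b b'))

lemma C5_triangle_free : ∀ a b c : Fin 5, C5.Adj a b → C5.Adj a c → C5.Adj b c → False := by
  decide

lemma C5_indep : ∀ a b c : Fin 5, ¬C5.Adj a b → ¬C5.Adj a c → ¬C5.Adj b c →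
    a = b ∨ a = c ∨ b = c := by decide

lemma C5_no_two_coloring : ∀ f : Fin 5 → Fin 2, ∃ i j, C5.Adj i j ∧ f i = f j := by decide

lemma C5_three_coloring : ∀ i j, C5.Adj i j →
    (![0, 1, 0, 1, 2] : Fin 5 → Fin 3) i ≠ ![0, 1, 0, 1, 2] j := by decide

lemma C5_degree : ∀ b : Fin 5, C5.degree b = 2 := by decide

/-- Upper bound for chromatic number. -/
lemma colorable_up (ht : 1 ≤ t) : (G).Colorable (t + 3) := by
  refine ⟨SimpleGraph.Coloring.mk
    (fun v => match v with
      | Sum.inl a => ⟨a.val, by omega⟩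
      | Sum.inr b => ⟨t + ((![0, 1, 0, 1, 2] : Fin 5 → Fin 3) b).val, by
          have := ((![0, 1, 0, 1, 2] : Fin 5 → Fin 3) b).isLt; omega⟩) ?_⟩
  rintro (a | b) (a' | b') h hc
  · simp only [Fin.mk.injEq] at hc
    exact (join_adj_ll.mp h) (Fin.ext hc)
  · simp only [Fin.mk.injEq] at hc
    have := a.isLt; omega
  · simp only [Fin.mk.injEq] at hc
    have := a'.isLt; omega
  · simp only [Fin.mk.injEq] at hc
    exact C5_three_coloring b b' (join_adj_rr.mp h) (Fin.ext (by omega))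

/-- Lower bound: not `(t+2)`-colorable. -/
lemma not_colorable (ht : 1 ≤ t) : ¬ (G).Colorable (t + 2) := by
  rintro ⟨c⟩
  classical
  set img : Finset (Fin (t + 2)) := Finset.univ.image (fun a : Fin t => c (Sum.inl a)) with himg
  have hinj : Function.Injective (fun a : Fin t => c (Sum.inl a)) := by
    intro a a' h
    by_contra hne
    exact c.valid (join_adj_ll.mpr hne) h
  have himgcard : img.card = t := by
    rw [himg, Finset.card_image_of_injective _ hinj, Finset.card_univ, Fintype.card_fin]
  set T : Finset (Fin (t + 2)) := Finset.univ \ img with hT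
  have hTcard : T.card = 2 := by
    rw [hT, Finset.card_sdiff_of_subset (Finset.subset_univ _), Finset.card_univ, Fintype.card_fin,
      himgcard]
    omega
  have hmem : ∀ b : Fin 5, c (Sum.inr b) ∈ T := by
    intro b
    rw [hT, Finset.mem_sdiff]
    refine ⟨Finset.mem_univ _, ?_⟩
    intro hb
    rw [himg, Finset.mem_image] at hb
    obtain ⟨a, -, ha⟩ := hb
    exact c.valid (join_adj_lr (a := a) (b := b)) ha
  let e : T ≃ Fin 2 := T.equivFinOfCardEq hTcard
  obtain ⟨i, j, hij, heq⟩ := C5_no_two_coloring (fun b => e ⟨c (Sum.inr b), hmem b⟩)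
  have : c (Sum.inr i) = c (Sum.inr j) := by
    have := e.injective heq
    exact Subtype.ext_iff.mp this
  exact c.valid (join_adj_rr.mpr hij) this

lemma chrom_eq (ht : 1 ≤ t) : (G).chromaticNumber = ((t + 3 : ℕ) : ℕ∞) := by
  refine le_antisymm ((colorable_up ht).chromaticNumber_le) ?_
  have h : ¬ (G).chromaticNumber ≤ ((t + 2 : ℕ) : ℕ∞) := by
    rw [SimpleGraph.chromaticNumber_le_iff_colorable]
    exact not_colorable ht
  push_neg at h
  have := (ENat.add_one_le_iff (n := (G).chromaticNumber) (m := ((t + 2 : ℕ) : ℕ∞))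
    (by exact_mod_cast WithTop.coe_ne_top)).mpr h
  calc ((t + 3 : ℕ) : ℕ∞) = ((t + 2 : ℕ) : ℕ∞) + 1 := by push_cast; ring
  _ ≤ _ := this

lemma clique_eq (ht : 1 ≤ t) : cliqueNum (G) = t + 2 := by
  classical
  have hub : ∀ n ∈ {n | ∃ S : Finset (Fin t ⊕ Fin 5), (G).IsNClique n S}, n ≤ t + 2 := by
    rintro n ⟨S, hS⟩
    have hcard := hS.card_eq
    have hsplit := Finset.card_toLeft_add_card_toRight (u := S)
    have hL : S.toLeft.card ≤ t := le_trans (Finset.card_le_univ _) (by simp)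
    have hR : S.toRight.card ≤ 2 := by
      by_contra hR
      push_neg at hR
      obtain ⟨a, b, c', ha, hb, hc, hab, hac, hbc⟩ := Finset.two_lt_card_iff.mp hR
      rw [Finset.mem_toRight] at ha hb hc
      have h1 := hS.isClique ha hb (by simp [hab])
      have h2 := hS.isClique ha hc (by simp [hac])
      have h3 := hS.isClique hb hc (by simp [hbc])
      exact C5_triangle_free a b c' (join_adj_rr.mp h1) (join_adj_rr.mp h2)
        (join_adj_rr.mp h3)
    omega
  have hwit : (t + 2) ∈ {n | ∃ S : Finset (Fin t ⊕ Fin 5), (G).IsNClique n S} := by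
    refine ⟨(Finset.univ.image Sum.inl) ∪ {Sum.inr 0, Sum.inr 1}, ?_, ?_⟩
    · intro x hx y hy hxy
      simp only [Finset.coe_union, Finset.coe_image, Finset.coe_univ, Set.image_univ,
        Finset.coe_insert, Finset.coe_singleton, Set.mem_union, Set.mem_range,
        Set.mem_insert_iff, Set.mem_singleton_iff] at hx hy
      rcases hx with ⟨a, rfl⟩ | hx <;> rcases hy with ⟨a', rfl⟩ | hy
      · exact join_adj_ll.mpr (fun h => hxy (by rw [h]))
      · rcases hy with rfl | rfl <;> exact join_adj_lr
      · rcases hx with rfl | rfl <;> exact join_adj_rl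
      · rcases hx with rfl | rfl <;> rcases hy with rfl | rfl
        · exact absurd rfl hxy
        · exact join_adj_rr.mpr (by decide)
        · exact join_adj_rr.mpr (by decide)
        · exact absurd rfl hxy
    · have hdisj : Disjoint (Finset.univ.image (Sum.inl : Fin t → Fin t ⊕ Fin 5))
          {Sum.inr 0, Sum.inr 1} := by simp [Finset.disjoint_left]
      rw [Finset.card_union_of_disjoint hdisj,
        Finset.card_image_of_injective _ Sum.inl_injective]
      simp
  refine le_antisymm (csSup_le ⟨t + 2, hwit⟩ hub) (le_csSup ⟨t + 2, fun n hn => hub n hn⟩ hwit)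

lemma deg_eq_degree (v : Fin t ⊕ Fin 5) : deg (G) v = (G).degree v := by
  classical
  rw [deg, Set.ncard_eq_toFinset_card', SimpleGraph.degree]
  congr 1

lemma deg_inl (a : Fin t) : deg (G) (Sum.inl a) = t + 4 := by
  classical
  rw [deg_eq_degree]
  have : (G).neighborFinset (Sum.inl a) =
      ((Finset.univ.erase a).map ⟨Sum.inl, Sum.inl_injective⟩) ∪
      (Finset.univ.map ⟨Sum.inr, Sum.inr_injective⟩) := by
    ext x
    rcases x with a' | b
    · simp [SimpleGraph.mem_neighborFinset, eq_comm, ne_comm]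
    · simp [SimpleGraph.mem_neighborFinset]
  have hdisj : Disjoint ((Finset.univ.erase a).map ⟨Sum.inl, Sum.inl_injective⟩)
      (Finset.univ.map (⟨Sum.inr, Sum.inr_injective⟩ : Fin 5 ↪ Fin t ⊕ Fin 5)) := by
    simp [Finset.disjoint_left]
  rw [SimpleGraph.degree, this, Finset.card_union_of_disjoint hdisj, Finset.card_map,
    Finset.card_map, Finset.card_erase_of_mem (Finset.mem_univ _)]
  simp only [Finset.card_univ, Fintype.card_fin]
  have : 0 < t := a.pos
  omega

lemma deg_inr (b : Fin 5) : deg (G) (Sum.inr b) = t + 2 := by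
  classical
  rw [deg_eq_degree]
  have : (G).neighborFinset (Sum.inr b) =
      (Finset.univ.map ⟨Sum.inl, Sum.inl_injective⟩) ∪
      ((C5.neighborFinset b).map ⟨Sum.inr, Sum.inr_injective⟩) := by
    ext x
    rcases x with a' | b'
    · simp [SimpleGraph.mem_neighborFinset]
    · simp [SimpleGraph.mem_neighborFinset]
  have hdisj : Disjoint (Finset.univ.map (⟨Sum.inl, Sum.inl_injective⟩ : Fin t ↪ Fin t ⊕ Fin 5))
      ((C5.neighborFinset b).map ⟨Sum.inr, Sum.inr_injective⟩) := by
    simp [Finset.disjoint_left]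
  rw [SimpleGraph.degree, this, Finset.card_union_of_disjoint hdisj, Finset.card_map,
    Finset.card_map]
  have h2 := C5_degree b
  rw [SimpleGraph.degree] at h2
  simp [h2]

lemma maxdeg_eq (ht : 1 ≤ t) : maxDeg (G) = t + 4 := by
  have hub : ∀ x ∈ Set.range (deg (G)), x ≤ t + 4 := by
    rintro x ⟨v, rfl⟩
    rcases v with a | b
    · rw [deg_inl]
    · rw [deg_inr]; omega
  have hwit : t + 4 ∈ Set.range (deg (G)) := ⟨Sum.inl ⟨0, ht⟩, deg_inl _⟩
  exact le_antisymm (csSup_le ⟨_, hwit⟩ hub) (le_csSup ⟨t + 4, fun n hn => hub n hn⟩ hwit)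

lemma claw_free : ClawFree (G) := by
  rintro v (a | a) (b | b) (c | c) _ _ _ hab hac hbc
  · left; by_contra h; exact hab (join_adj_ll.mpr (fun he => h (by rw [he])))
  · left; by_contra h; exact hab (join_adj_ll.mpr (fun he => h (by rw [he])))
  · exact absurd join_adj_lr hab
  · exact absurd join_adj_lr hab
  · exact absurd join_adj_rl hab
  · exact absurd join_adj_rl hab
  · exact absurd join_adj_rl hbc
  · rcases C5_indep a b c (fun h => hab (join_adj_rr.mpr h))
      (fun h => hac (join_adj_rr.mpr h)) (fun h => hbc (join_adj_rr.mpr h)) with h | h | h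
    · left; rw [h]
    · right; left; rw [h]
    · right; right; rw [h]

end lemmas

/-- For `t ≥ 1`, `G_t = K_t * C_5` has `χ = t + 3`, `ω = t + 2`, `Δ = t + 4`, and is
claw-free. -/
theorem stmt10 (t : ℕ) (ht : 1 ≤ t) :
    (join (⊤ : SimpleGraph (Fin t)) C5).chromaticNumber = ((t + 3 : ℕ) : ℕ∞) ∧
    cliqueNum (join (⊤ : SimpleGraph (Fin t)) C5) = t + 2 ∧
    maxDeg (join (⊤ : SimpleGraph (Fin t)) C5) = t + 4 ∧
    ClawFree (join (⊤ : SimpleGraph (Fin t)) C5) := by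
  exact ⟨chrom_eq ht, clique_eq ht, maxdeg_eq ht, claw_free⟩
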